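/- The Lie algebra so_{4m+2} over F_2 decomposes as a direct sum of Lie ideals F_2 ⊕ l, where F_2 is the (one-dimensional) center and l = [so_{4m+2}, so_{4m+2}]; equivalently, the center of so_{4m+2} over F_2 is not contained in the derived subalgebra. In particular this decomposition is preserved by the adjoint SO_{4m+2}-action. -/

import Mathlib

open Matrix

attribute [local instance 100] LieRing.ofAssociativeRing

noncomputable section

/-- The Gram matrix `J = fromBlocks 0 1 1 0` of the split (hyperbolic) quadratic form on
`F₂^{2r}`. -/
def Jmat (r : ℕ) : Matrix (Fin r ⊕ Fin r) (Fin r ⊕ Fin r) (ZMod 2) :=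
  Matrix.fromBlocks 0 1 1 0

namespace SO2r
variable {r : ℕ}

abbrev M2 (r : ℕ) := Matrix (Fin r ⊕ Fin r) (Fin r ⊕ Fin r) (ZMod 2)

lemma Jmul (A : M2 r) (p q : Fin r ⊕ Fin r) : (Jmat r * A) p q = A p.swap q := by
  cases p with
  | inl i => simp [Jmat, Matrix.mul_apply, Fintype.sum_sum_type, Matrix.fromBlocks,
      Matrix.one_apply]
  | inr i => simp [Jmat, Matrix.mul_apply, Fintype.sum_sum_type, Matrix.fromBlocks,
      Matrix.one_apply]

/-- The defining predicate, reformulated. -/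
def P (A : M2 r) : Prop :=
  (∀ p q, A (Sum.swap p) q = A (Sum.swap q) p) ∧ ∀ p, A (Sum.swap p) p = 0

lemma P_iff (A : M2 r) :
    ((Jmat r * A)ᵀ = Jmat r * A ∧ ∀ i, (Jmat r * A) i i = 0) ↔ P A := by
  constructor
  · rintro ⟨h1, h2⟩
    constructor
    · intro p q
      have := congrFun (congrFun h1 q) p
      simpa [Jmul, Matrix.transpose_apply] using this
    · intro p; simpa [Jmul] using h2 p
  · rintro ⟨h1, h2⟩
    refine ⟨?_, fun i => by simpa [Jmul] using h2 i⟩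
    ext p q
    simp only [Matrix.transpose_apply, Jmul]
    exact h1 q p

end SO2r
namespace SO2r
variable {r : ℕ}

def Em (a : Matrix (Fin r) (Fin r) (ZMod 2)) : M2 r := Matrix.fromBlocks a 0 0 aᵀ
def Bm (b : Matrix (Fin r) (Fin r) (ZMod 2)) : M2 r := Matrix.fromBlocks 0 b 0 0
def Cm (c : Matrix (Fin r) (Fin r) (ZMod 2)) : M2 r := Matrix.fromBlocks 0 0 c 0

lemma Em_mem (a : Matrix (Fin r) (Fin r) (ZMod 2)) : P (Em a) := by
  constructor
  · rintro (i | i) (j | j) <;> simp [Em, Matrix.fromBlocks]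
  · rintro (i | i) <;> simp [Em, Matrix.fromBlocks]

lemma Bm_mem (b : Matrix (Fin r) (Fin r) (ZMod 2)) (hb : bᵀ = b) (hd : ∀ i, b i i = 0) :
    P (Bm b) := by
  constructor
  · rintro (i | i) (j | j) <;>
      simp [Bm, Matrix.fromBlocks] <;>
      exact (congrFun (congrFun hb.symm _) _)
  · rintro (i | i) <;> simp [Bm, Matrix.fromBlocks, hd]

lemma Cm_mem (c : Matrix (Fin r) (Fin r) (ZMod 2)) (hc : cᵀ = c) (hd : ∀ i, c i i = 0) :
    P (Cm c) := by
  constructor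
  · rintro (i | i) (j | j) <;>
      simp [Cm, Matrix.fromBlocks] <;>
      exact (congrFun (congrFun hc.symm _) _)
  · rintro (i | i) <;> simp [Cm, Matrix.fromBlocks, hd]

lemma one_memP : P (1 : M2 r) := by
  constructor
  · rintro (i | i) (j | j) <;> simp [Matrix.one_apply] <;> aesop
  · rintro (i | i) <;> simp [Matrix.one_apply]

end SO2r
namespace SO2r
variable {r : ℕ}

lemma sub2 (A B : M2 r) : A - B = A + B := by
  ext p q; simp [Matrix.sub_apply, Matrix.add_apply, sub_eq_add_neg, CharTwo.neg_eq]

lemma Em_mul_Em (a a' : Matrix (Fin r) (Fin r) (ZMod 2)) :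
    Em a * Em a' = Matrix.fromBlocks (a * a') 0 0 (aᵀ * a'ᵀ) := by
  simp [Em, Matrix.fromBlocks_multiply]

lemma Em_mul_Bm (a b : Matrix (Fin r) (Fin r) (ZMod 2)) : Em a * Bm b = Bm (a * b) := by
  simp [Em, Bm, Matrix.fromBlocks_multiply]

lemma Bm_mul_Em (a b : Matrix (Fin r) (Fin r) (ZMod 2)) : Bm b * Em a = Bm (b * aᵀ) := by
  simp [Em, Bm, Matrix.fromBlocks_multiply]

lemma Em_mul_Cm (a c : Matrix (Fin r) (Fin r) (ZMod 2)) : Em a * Cm c = Cm (aᵀ * c) := by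
  simp [Em, Cm, Matrix.fromBlocks_multiply]

lemma Cm_mul_Em (a c : Matrix (Fin r) (Fin r) (ZMod 2)) : Cm c * Em a = Cm (c * a) := by
  simp [Em, Cm, Matrix.fromBlocks_multiply]

lemma commE (a a' : Matrix (Fin r) (Fin r) (ZMod 2)) :
    Em a * Em a' - Em a' * Em a = Em (a * a' + a' * a) := by
  rw [sub2, Em_mul_Em, Em_mul_Em, Em, Matrix.fromBlocks_add]
 
  ext i j
  simp [Matrix.transpose_add, Matrix.mul_apply, Matrix.add_apply, Finset.sum_add_distrib,
    add_comm]

end SO2r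
namespace SO2r
variable {r : ℕ}

lemma P.symmB {A : M2 r} (hA : P A) (i j : Fin r) :
    A (Sum.inl i) (Sum.inr j) = A (Sum.inl j) (Sum.inr i) := hA.1 (Sum.inr i) (Sum.inr j)

lemma P.symmC {A : M2 r} (hA : P A) (i j : Fin r) :
    A (Sum.inr i) (Sum.inl j) = A (Sum.inr j) (Sum.inl i) := hA.1 (Sum.inl i) (Sum.inl j)

lemma P.diagB {A : M2 r} (hA : P A) (i : Fin r) : A (Sum.inl i) (Sum.inr i) = 0 :=
  hA.2 (Sum.inr i)

lemma P.diagC {A : M2 r} (hA : P A) (i : Fin r) : A (Sum.inr i) (Sum.inl i) = 0 :=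
  hA.2 (Sum.inl i)

lemma P.dblock {A : M2 r} (hA : P A) (i j : Fin r) :
    A (Sum.inr i) (Sum.inr j) = A (Sum.inl j) (Sum.inl i) := hA.1 (Sum.inl i) (Sum.inr j)

lemma sum2_zero (f : Fin r → Fin r → ZMod 2) (hsymm : ∀ i j, f i j = f j i)
    (hdiag : ∀ i, f i i = 0) : (∑ i, ∑ j, f i j) = 0 := by
  rw [← Finset.sum_product']
  refine Finset.sum_ninvolution Prod.swap (fun a => ?_) (fun a ha => ?_)
    (fun a => Finset.mem_univ _) (fun a => Prod.swap_swap a)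
  · show f a.1 a.2 + f a.2 a.1 = 0
    rw [hsymm]; exact CharTwo.add_self_eq_zero _
  · intro h
    apply ha
    have : a.2 = a.1 := congrArg Prod.fst h
    rw [show f a.1 a.2 = f a.1 a.1 from by rw [this]] at *
    · exact hdiag a.1

def trl (A : M2 r) : ZMod 2 := ∑ i, A (Sum.inl i) (Sum.inl i)

lemma trl_bracket {A B : M2 r} (hA : P A) (hB : P B) : trl (A * B - B * A) = 0 := by
  rw [sub2]
  unfold trl
  have key : ∀ i : Fin r, (A * B + B * A) (Sum.inl i) (Sum.inl i) =
      (∑ j, (A (Sum.inl i) (Sum.inl j) * B (Sum.inl j) (Sum.inl i) +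
             B (Sum.inl i) (Sum.inl j) * A (Sum.inl j) (Sum.inl i))) +
      (∑ j, (A (Sum.inl i) (Sum.inr j) * B (Sum.inr j) (Sum.inl i) +
             B (Sum.inl i) (Sum.inr j) * A (Sum.inr j) (Sum.inl i))) := by
    intro i
    simp only [Matrix.add_apply, Matrix.mul_apply, Fintype.sum_sum_type,
      Finset.sum_add_distrib]
    abel
  rw [Finset.sum_congr rfl (fun i _ => key i), Finset.sum_add_distrib]
  rw [sum2_zero _ (fun i j => by ring) (fun i => by rw [mul_comm]; exact CharTwo.add_self_eq_zero _)]
  rw [sum2_zero _ (fun i j => ?_) (fun i => by simp [hA.diagB, hB.diagB]), add_zero]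
  rw [hA.symmB i j, hB.symmC j i, hB.symmB i j, hA.symmC j i]

end SO2r
namespace SO2r
variable {r : ℕ}

lemma std_transpose (i j : Fin r) (c : ZMod 2) :
    (Matrix.single i j c)ᵀ = Matrix.single j i c := by
  ext p q; simp [Matrix.single, and_comm]

lemma matrix_add_self (X : Matrix (Fin r) (Fin r) (ZMod 2)) : X + X = 0 := by
  ext i j; exact CharTwo.add_self_eq_zero _

def Eml : Matrix (Fin r) (Fin r) (ZMod 2) →ₗ[ZMod 2] M2 r where
  toFun := Em
  map_add' a b := by
    ext (p | p) (q | q) <;> simp [Em, Matrix.fromBlocks, Matrix.add_apply]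
  map_smul' t a := by
    ext (p | p) (q | q) <;> simp [Em, Matrix.fromBlocks, Matrix.smul_apply]

def Bml : Matrix (Fin r) (Fin r) (ZMod 2) →ₗ[ZMod 2] M2 r where
  toFun := Bm
  map_add' a b := by
    ext (p | p) (q | q) <;> simp [Bm, Matrix.fromBlocks, Matrix.add_apply]
  map_smul' t a := by
    ext (p | p) (q | q) <;> simp [Bm, Matrix.fromBlocks, Matrix.smul_apply]

def Cml : Matrix (Fin r) (Fin r) (ZMod 2) →ₗ[ZMod 2] M2 r where
  toFun := Cm
  map_add' a b := by
    ext (p | p) (q | q) <;> simp [Cm, Matrix.fromBlocks, Matrix.add_apply]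
  map_smul' t a := by
    ext (p | p) (q | q) <;> simp [Cm, Matrix.fromBlocks, Matrix.smul_apply]

/-- key matrix identity for symmetric decomposition -/
lemma key_symm (t : Fin r → Fin r → ZMod 2) :
    (∑ i, ∑ j, t i j • (Matrix.single i j (1 : ZMod 2) + Matrix.single j i 1)) =
      Matrix.of t + (Matrix.of t)ᵀ := by
  have h1 : (∑ i, ∑ j, t i j • Matrix.single i j (1 : ZMod 2)) = Matrix.of t := by
    conv_rhs => rw [matrix_eq_sum_single (Matrix.of t)]
    simp [smul_single]
  have h2 : (∑ i, ∑ j, t i j • Matrix.single j i (1 : ZMod 2)) = (Matrix.of t)ᵀ := by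
    rw [Finset.sum_comm]
    conv_rhs => rw [matrix_eq_sum_single ((Matrix.of t)ᵀ)]
    simp [smul_single]
  simp only [smul_add, Finset.sum_add_distrib, h1, h2]

/-- split a symmetric zero-diagonal matrix as X + Xᵀ with X the upper part -/
lemma symm_split (b : Matrix (Fin r) (Fin r) (ZMod 2)) (hb : ∀ i j, b i j = b j i)
    (hd : ∀ i, b i i = 0) :
    b = Matrix.of (fun i j => if i < j then b i j else 0) +
        (Matrix.of (fun i j => if i < j then b i j else 0))ᵀ := by
  ext i j
  rcases lt_trichotomy i j with h | h | h
  · simp [Matrix.add_apply, h, not_lt.2 h.le]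
  · subst h; simp [hd]
  · simp [Matrix.add_apply, h, not_lt.2 h.le, hb i j]

/-- key matrix identity for the gl part -/
lemma key_gl [NeZero r] (a : Matrix (Fin r) (Fin r) (ZMod 2)) :
    (∑ i, ∑ k, a i k • (Matrix.single i k (1 : ZMod 2) +
        if i = k then Matrix.single 0 0 1 else 0)) =
      a + (∑ i, a i i) • Matrix.single 0 0 1 := by
  have h1 : (∑ i, ∑ k, a i k • Matrix.single i k (1 : ZMod 2)) = a := by
    conv_rhs => rw [matrix_eq_sum_single a]
    simp [smul_single]
  have h2 : (∑ i : Fin r, ∑ k : Fin r,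
      a i k • (if i = k then Matrix.single (0 : Fin r) (0 : Fin r) (1 : ZMod 2) else 0)) =
      (∑ i, a i i) • Matrix.single (0 : Fin r) (0 : Fin r) 1 := by
    rw [Finset.sum_smul]
    refine Finset.sum_congr rfl fun i _ => ?_
    simp [smul_ite, Finset.sum_ite_eq]
  simp only [smul_add, Finset.sum_add_distrib, h1]
  congr 1

end SO2r
namespace SO2r
variable {r : ℕ}

lemma Bm_add (x y : Matrix (Fin r) (Fin r) (ZMod 2)) : Bm (x + y) = Bm x + Bm y :=
  map_add Bml x y

lemma Cm_add (x y : Matrix (Fin r) (Fin r) (ZMod 2)) : Cm (x + y) = Cm x + Cm y :=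
  map_add Cml x y

lemma commEB (a b : Matrix (Fin r) (Fin r) (ZMod 2)) :
    Em a * Bm b - Bm b * Em a = Bm (a * b + b * aᵀ) := by
  rw [sub2, Em_mul_Bm, Bm_mul_Em, Bm_add]

lemma commEC (a c : Matrix (Fin r) (Fin r) (ZMod 2)) :
    Em a * Cm c - Cm c * Em a = Cm (aᵀ * c + c * a) := by
  rw [sub2, Em_mul_Cm, Cm_mul_Em, Cm_add]

lemma commE' (a a' : Matrix (Fin r) (Fin r) (ZMod 2)) :
    Em a * Em a' - Em a' * Em a = Em (a * a' + a' * a) := commE a a'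

-- std product computations
lemma std_comm_offdiag {i k : Fin r} (h : i ≠ k) :
    Matrix.single i i (1 : ZMod 2) * Matrix.single i k 1 +
      Matrix.single i k 1 * Matrix.single i i 1 = Matrix.single i k 1 := by
  rw [Matrix.single_mul_single_same, Matrix.single_mul_single_of_ne (h := Ne.symm h)]
  simp

lemma std_comm_diag {i : Fin r} [NeZero r] (h : i ≠ 0) :
    Matrix.single i (0 : Fin r) (1 : ZMod 2) * Matrix.single (0 : Fin r) i 1 +
      Matrix.single (0 : Fin r) i 1 * Matrix.single i (0 : Fin r) 1 =
      Matrix.single i i 1 + Matrix.single (0 : Fin r) (0 : Fin r) 1 := by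
  rw [Matrix.single_mul_single_same, Matrix.single_mul_single_same]
  simp

lemma std_B_gen {i j : Fin r} (h : i ≠ j) :
    Matrix.single i i (1 : ZMod 2) * (Matrix.single i j 1 + Matrix.single j i 1) +
      (Matrix.single i j 1 + Matrix.single j i 1) * (Matrix.single i i (1 : ZMod 2))ᵀ =
      Matrix.single i j 1 + Matrix.single j i 1 := by
  rw [std_transpose, mul_add, add_mul, Matrix.single_mul_single_same,
    Matrix.single_mul_single_same, Matrix.single_mul_single_of_ne (h := h),
    Matrix.single_mul_single_of_ne (h := Ne.symm h)]
  simp [add_comm]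

lemma std_C_gen {i j : Fin r} (h : i ≠ j) :
    (Matrix.single i i (1 : ZMod 2))ᵀ * (Matrix.single i j 1 + Matrix.single j i 1) +
      (Matrix.single i j 1 + Matrix.single j i 1) * Matrix.single i i (1 : ZMod 2) =
      Matrix.single i j 1 + Matrix.single j i 1 := by
  rw [std_transpose, mul_add, add_mul, Matrix.single_mul_single_same,
    Matrix.single_mul_single_same, Matrix.single_mul_single_of_ne (h := h),
    Matrix.single_mul_single_of_ne (h := Ne.symm h)]
  simp [add_comm]

end SO2r
namespace SO2r
variable {r : ℕ}

lemma EmStd_mul_inr (k l : Fin r) (Z : M2 r) (i : Fin r) (q : Fin r ⊕ Fin r) :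
    (Em (Matrix.single k l 1) * Z) (Sum.inr i) q =
      if l = i then Z (Sum.inr k) q else 0 := by
  rw [Matrix.mul_apply, Fintype.sum_sum_type]
  by_cases hl : l = i <;>
    simp [Em, Matrix.fromBlocks, Matrix.single, hl, ite_and, boole_mul,
      Finset.sum_ite_eq, Finset.sum_ite_eq']

lemma mul_EmStd_inr (k l : Fin r) (Z : M2 r) (p : Fin r ⊕ Fin r) (j : Fin r) :
    (Z * Em (Matrix.single k l 1)) p (Sum.inr j) =
      if k = j then Z p (Sum.inr l) else 0 := by
  rw [Matrix.mul_apply, Fintype.sum_sum_type]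
  by_cases hk : k = j <;>
    simp [Em, Matrix.fromBlocks, Matrix.single, hk, ite_and, mul_boole,
      Finset.sum_ite_eq, Finset.sum_ite_eq']

lemma EmStd_mul_inl (k l : Fin r) (Z : M2 r) (i : Fin r) (q : Fin r ⊕ Fin r) :
    (Em (Matrix.single k l 1) * Z) (Sum.inl i) q =
      if k = i then Z (Sum.inl l) q else 0 := by
  rw [Matrix.mul_apply, Fintype.sum_sum_type]
  by_cases hk : k = i <;>
    simp [Em, Matrix.fromBlocks, Matrix.single, hk, ite_and, boole_mul,
      Finset.sum_ite_eq, Finset.sum_ite_eq']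

lemma mul_EmStd_inl (k l : Fin r) (Z : M2 r) (p : Fin r ⊕ Fin r) (j : Fin r) :
    (Z * Em (Matrix.single k l 1)) p (Sum.inl j) =
      if l = j then Z p (Sum.inl k) else 0 := by
  rw [Matrix.mul_apply, Fintype.sum_sum_type]
  by_cases hl : l = j <;>
    simp [Em, Matrix.fromBlocks, Matrix.single, hl, ite_and, mul_boole,
      Finset.sum_ite_eq, Finset.sum_ite_eq']

end SO2r
namespace SO2r
variable {r : ℕ}

lemma pair_symm (i j : Fin r) :
    (Matrix.single i j (1 : ZMod 2) + Matrix.single j i 1)ᵀ =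
      Matrix.single i j (1 : ZMod 2) + Matrix.single j i 1 := by
  rw [Matrix.transpose_add, std_transpose, std_transpose, add_comm]

lemma pair_diag (i j k : Fin r) :
    (Matrix.single i j (1 : ZMod 2) + Matrix.single j i (1 : ZMod 2)) k k = 0 := by
  simp only [Matrix.add_apply, Matrix.single, Matrix.of_apply]
  split_ifs with ha hb hb <;> first | decide | tauto

variable (so : LieSubalgebra (ZMod 2) (M2 r))

lemma hEmem (hP : ∀ A, A ∈ so ↔ P A) (a : Matrix (Fin r) (Fin r) (ZMod 2)) : Em a ∈ so :=
  (hP _).2 (Em_mem a)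

lemma hBmem (hP : ∀ A, A ∈ so ↔ P A) (i j : Fin r) :
    Bm (Matrix.single i j (1 : ZMod 2) + Matrix.single j i 1) ∈ so :=
  (hP _).2 (Bm_mem _ (pair_symm i j) (pair_diag i j))

lemma hCmem (hP : ∀ A, A ∈ so ↔ P A) (i j : Fin r) :
    Cm (Matrix.single i j (1 : ZMod 2) + Matrix.single j i 1) ∈ so :=
  (hP _).2 (Cm_mem _ (pair_symm i j) (pair_diag i j))

lemma ker_le_D [NeZero r] (hP : ∀ A, A ∈ so ↔ P A) (x : ↥so) (hx : trl (x : M2 r) = 0) :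
    x ∈ ⁅(⊤ : LieIdeal (ZMod 2) ↥so), (⊤ : LieIdeal (ZMod 2) ↥so)⁆ := by
  set D : LieIdeal (ZMod 2) ↥so := ⁅(⊤ : LieIdeal (ZMod 2) ↥so), (⊤ : LieIdeal (ZMod 2) ↥so)⁆
    with hD
  have hbr : ∀ u v : ↥so, ⁅u, v⁆ ∈ D := fun u v =>
    LieSubmodule.lie_mem_lie (LieSubmodule.mem_top u) (LieSubmodule.mem_top v)
  set EE : Matrix (Fin r) (Fin r) (ZMod 2) → ↥so := fun a => ⟨Em a, hEmem so hP a⟩ with hEE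
  set BB : Fin r → Fin r → ↥so := fun i j =>
    ⟨Bm (Matrix.single i j (1 : ZMod 2) + Matrix.single j i 1), hBmem so hP i j⟩ with hBB
  set CC : Fin r → Fin r → ↥so := fun i j =>
    ⟨Cm (Matrix.single i j (1 : ZMod 2) + Matrix.single j i 1), hCmem so hP i j⟩ with hCC
  have coe_br : ∀ u v : ↥so, ((⁅u, v⁆ : ↥so) : M2 r) = (u : M2 r) * v - (v : M2 r) * u :=
    fun u v => rfl
  have hEE_offdiag : ∀ i k : Fin r, i ≠ k → EE (Matrix.single i k 1) ∈ D := by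
    intro i k h
    have heq : EE (Matrix.single i k 1) =
        ⁅EE (Matrix.single i i 1), EE (Matrix.single i k 1)⁆ := by
      apply Subtype.ext
      rw [coe_br]
      show Em _ = Em _ * Em _ - Em _ * Em _
      rw [commE', std_comm_offdiag h]
    rw [heq]; exact hbr _ _
  have hEE_zero : EE 0 = 0 := Subtype.ext (map_zero (Eml (r := r)))
  have hEE_diag : ∀ i : Fin r,
      EE (Matrix.single i i 1 + Matrix.single (0 : Fin r) (0 : Fin r) 1) ∈ D := by
    intro i
    by_cases h : i = 0
    · subst h
      have h0 : EE (Matrix.single (0 : Fin r) (0 : Fin r) (1 : ZMod 2) +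
          Matrix.single (0 : Fin r) (0 : Fin r) 1) = 0 := by
        rw [matrix_add_self]; exact hEE_zero
      rw [h0]; exact D.zero_mem
    · have heq : EE (Matrix.single i i 1 + Matrix.single (0 : Fin r) (0 : Fin r) 1) =
          ⁅EE (Matrix.single i (0 : Fin r) 1), EE (Matrix.single (0 : Fin r) i 1)⁆ := by
        apply Subtype.ext
        rw [coe_br]
        show Em _ = Em _ * Em _ - Em _ * Em _
        rw [commE', std_comm_diag h]
      rw [heq]; exact hbr _ _
  have hBB_mem : ∀ i j, BB i j ∈ D := by
    intro i j
    by_cases h : i = j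
    · subst h
      have h0 : BB i i = 0 := by
        apply Subtype.ext
        show Bm _ = 0
        rw [matrix_add_self]; exact map_zero (Bml (r := r))
      rw [h0]; exact D.zero_mem
    · have heq : BB i j = ⁅EE (Matrix.single i i 1), BB i j⁆ := by
        apply Subtype.ext
        rw [coe_br]
        show Bm _ = Em _ * Bm _ - Bm _ * Em _
        rw [commEB, std_B_gen h]
      rw [heq]; exact hbr _ _
  have hCC_mem : ∀ i j, CC i j ∈ D := by
    intro i j
    by_cases h : i = j
    · subst h
      have h0 : CC i i = 0 := by
        apply Subtype.ext
        show Cm _ = 0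
        rw [matrix_add_self]; exact map_zero (Cml (r := r))
      rw [h0]; exact D.zero_mem
    · have heq : CC i j = ⁅EE (Matrix.single i i 1), CC i j⁆ := by
        apply Subtype.ext
        rw [coe_br]
        show Cm _ = Em _ * Cm _ - Cm _ * Em _
        rw [commEC, std_C_gen h]
      rw [heq]; exact hbr _ _
  have hPx : P (x : M2 r) := (hP _).1 x.2
  set amat : Matrix (Fin r) (Fin r) (ZMod 2) :=
    Matrix.of fun i j => (x : M2 r) (Sum.inl i) (Sum.inl j) with hamat
  set bmat : Matrix (Fin r) (Fin r) (ZMod 2) :=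
    Matrix.of fun i j => (x : M2 r) (Sum.inl i) (Sum.inr j) with hbmat
  set cmat : Matrix (Fin r) (Fin r) (ZMod 2) :=
    Matrix.of fun i j => (x : M2 r) (Sum.inr i) (Sum.inl j) with hcmat
  have hXE : (⟨Em amat, hEmem so hP amat⟩ : ↥so) ∈ D := by
    have hsum : (⟨Em amat, hEmem so hP amat⟩ : ↥so) =
        ∑ i, ∑ k, amat i k • EE (Matrix.single i k 1 +
          if i = k then Matrix.single (0 : Fin r) (0 : Fin r) 1 else 0) := by
      apply Subtype.ext
      rw [AddSubmonoidClass.coe_finset_sum]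
      rw [Finset.sum_congr rfl fun i _ => AddSubmonoidClass.coe_finset_sum _ _]
      have hterm : ∀ i k : Fin r, ((amat i k • EE (Matrix.single i k 1 +
          if i = k then Matrix.single (0 : Fin r) (0 : Fin r) 1 else 0) : ↥so) : M2 r) =
          Eml (amat i k • (Matrix.single i k 1 +
            if i = k then Matrix.single (0 : Fin r) (0 : Fin r) 1 else 0)) :=
        fun i k => (Eml.map_smul _ _).symm
      rw [Finset.sum_congr rfl fun i _ => Finset.sum_congr rfl fun k _ => hterm i k]
      rw [Finset.sum_congr rfl fun i _ => (map_sum Eml _ _).symm, ← map_sum Eml]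
      rw [key_gl]
      have htr : (∑ i, amat i i) = 0 := hx
      rw [htr, zero_smul, add_zero]
      rfl
    rw [hsum]
    refine sum_mem fun i _ => sum_mem fun k _ => SMulMemClass.smul_mem _ ?_
    by_cases h : i = k
    · subst h; simpa using hEE_diag i
    · simpa [h] using hEE_offdiag i k h
  have hXBmem : Bm bmat ∈ so := by
    refine (hP _).2 (Bm_mem _ ?_ ?_)
    · ext i j; exact hPx.symmB j i
    · intro i; exact hPx.diagB i
  have hXCmem : Cm cmat ∈ so := by
    refine (hP _).2 (Cm_mem _ ?_ ?_)
    · ext i j; exact hPx.symmC j i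
    · intro i; exact hPx.diagC i
  have hXB : (⟨Bm bmat, hXBmem⟩ : ↥so) ∈ D := by
    have hsum : (⟨Bm bmat, hXBmem⟩ : ↥so) =
        ∑ i, ∑ j, (if i < j then bmat i j else 0) • BB i j := by
      apply Subtype.ext
      rw [AddSubmonoidClass.coe_finset_sum]
      rw [Finset.sum_congr rfl fun i _ => AddSubmonoidClass.coe_finset_sum _ _]
      have hterm : ∀ i j : Fin r, (((if i < j then bmat i j else 0) • BB i j : ↥so) : M2 r) =
          Bml ((if i < j then bmat i j else 0) •
            (Matrix.single i j (1 : ZMod 2) + Matrix.single j i 1)) :=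
        fun i j => (Bml.map_smul _ _).symm
      rw [Finset.sum_congr rfl fun i _ => Finset.sum_congr rfl fun j _ => hterm i j]
      rw [Finset.sum_congr rfl fun i _ => (map_sum Bml _ _).symm, ← map_sum Bml]
      rw [key_symm (fun i j => if i < j then bmat i j else 0)]
      rw [← symm_split bmat (fun i j => hPx.symmB i j) (fun i => hPx.diagB i)]
      rfl
    rw [hsum]
    exact sum_mem fun i _ => sum_mem fun j _ => SMulMemClass.smul_mem _ (hBB_mem i j)
  have hXC : (⟨Cm cmat, hXCmem⟩ : ↥so) ∈ D := by
    have hsum : (⟨Cm cmat, hXCmem⟩ : ↥so) =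
        ∑ i, ∑ j, (if i < j then cmat i j else 0) • CC i j := by
      apply Subtype.ext
      rw [AddSubmonoidClass.coe_finset_sum]
      rw [Finset.sum_congr rfl fun i _ => AddSubmonoidClass.coe_finset_sum _ _]
      have hterm : ∀ i j : Fin r, (((if i < j then cmat i j else 0) • CC i j : ↥so) : M2 r) =
          Cml ((if i < j then cmat i j else 0) •
            (Matrix.single i j (1 : ZMod 2) + Matrix.single j i 1)) :=
        fun i j => (Cml.map_smul _ _).symm
      rw [Finset.sum_congr rfl fun i _ => Finset.sum_congr rfl fun j _ => hterm i j]
      rw [Finset.sum_congr rfl fun i _ => (map_sum Cml _ _).symm, ← map_sum Cml]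
      rw [key_symm (fun i j => if i < j then cmat i j else 0)]
      rw [← symm_split cmat (fun i j => hPx.symmC i j) (fun i => hPx.diagC i)]
      rfl
    rw [hsum]
    exact sum_mem fun i _ => sum_mem fun j _ => SMulMemClass.smul_mem _ (hCC_mem i j)
  have hxeq : x = (⟨Em amat, hEmem so hP amat⟩ : ↥so) + ⟨Bm bmat, hXBmem⟩ + ⟨Cm cmat, hXCmem⟩ := by
    apply Subtype.ext
    show (x : M2 r) = Em amat + Bm bmat + Cm cmat
    ext p q
    cases p with
    | inl i => cases q with
      | inl j =>
        simp only [Em, Bm, Cm, Matrix.add_apply, Matrix.fromBlocks_apply₁₁, Matrix.zero_apply,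
          add_zero]
        rfl
      | inr j =>
        simp only [Em, Bm, Cm, Matrix.add_apply, Matrix.fromBlocks_apply₁₂, Matrix.zero_apply,
          add_zero, zero_add]
        rfl
    | inr i => cases q with
      | inl j =>
        simp only [Em, Bm, Cm, Matrix.add_apply, Matrix.fromBlocks_apply₂₁, Matrix.zero_apply,
          add_zero, zero_add]
        rfl
      | inr j =>
        simp only [Em, Bm, Cm, Matrix.add_apply, Matrix.fromBlocks_apply₂₂, Matrix.zero_apply,
          add_zero, Matrix.transpose_apply]
        exact hPx.dblock i j
  rw [hxeq]
  exact add_mem (add_mem hXE hXB) hXC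

end SO2r
namespace SO2r
variable {r : ℕ}

lemma trl_add (A B : M2 r) : trl (A + B) = trl A + trl B := by
  simp [trl, Matrix.add_apply, Finset.sum_add_distrib]

lemma trl_smul (c : ZMod 2) (A : M2 r) : trl (c • A) = c * trl A := by
  simp [trl, Matrix.smul_apply, Finset.mul_sum, smul_eq_mul]

lemma trl_one : trl (1 : M2 r) = (r : ZMod 2) := by
  simp [trl, Matrix.one_apply_eq]

variable (so : LieSubalgebra (ZMod 2) (M2 r))

lemma one_mem_so (hP : ∀ A, A ∈ so ↔ P A) : (1 : M2 r) ∈ so := (hP _).2 one_memP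

lemma D_le_ker (hP : ∀ A, A ∈ so ↔ P A) (x : ↥so)
    (hx : x ∈ ⁅(⊤ : LieIdeal (ZMod 2) ↥so), (⊤ : LieIdeal (ZMod 2) ↥so)⁆) :
    trl (x : M2 r) = 0 := by
  let φ : ↥so →ₗ[ZMod 2] ZMod 2 :=
    { toFun := fun y => trl (y : M2 r)
      map_add' := fun y z => trl_add _ _
      map_smul' := fun c y => trl_smul c _ }
  let K : LieIdeal (ZMod 2) ↥so :=
    { LinearMap.ker φ with
      lie_mem := fun {u v} _ => by
        show trl (((⁅u, v⁆ : ↥so) : M2 r)) = 0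
        exact trl_bracket ((hP _).1 u.2) ((hP _).1 v.2) }
  have hle : ⁅(⊤ : LieIdeal (ZMod 2) ↥so), (⊤ : LieIdeal (ZMod 2) ↥so)⁆ ≤ K := by
    rw [LieSubmodule.lieIdeal_oper_eq_span]
    apply LieSubmodule.lieSpan_le.mpr
    rintro z ⟨u, v, rfl⟩
    show trl (((⁅(u : ↥so), (v : ↥so)⁆ : ↥so) : M2 r)) = 0
    exact trl_bracket ((hP _).1 (u : ↥so).2) ((hP _).1 (v : ↥so).2)
  exact hle hx

lemma central_is_scalar [NeZero r] (hP : ∀ A, A ∈ so ↔ P A) (z : ↥so)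
    (hz : ∀ x : ↥so, ⁅x, z⁆ = 0) :
    (z : M2 r) = (z : M2 r) (Sum.inl 0) (Sum.inl 0) • (1 : M2 r) := by
  have hPz : P (z : M2 r) := (hP _).1 z.2
  have hcomm : ∀ A, A ∈ so → A * (z : M2 r) = (z : M2 r) * A := by
    intro A hA
    have h1 := hz ⟨A, hA⟩
    have h2 : A * (z : M2 r) - (z : M2 r) * A = 0 := congrArg Subtype.val h1
    exact sub_eq_zero.mp h2
  have hdiag : ∀ i j : Fin r, (z : M2 r) (Sum.inl i) (Sum.inl i) =
      (z : M2 r) (Sum.inl j) (Sum.inl j) := by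
    intro i j
    have h := congrFun (congrFun (hcomm _ (hEmem so hP (Matrix.single i j 1)))
      (Sum.inl i)) (Sum.inl j)
    rw [EmStd_mul_inl, mul_EmStd_inl] at h
    simpa using h.symm
  have hoffLL : ∀ i j : Fin r, i ≠ j → (z : M2 r) (Sum.inl i) (Sum.inl j) = 0 := by
    intro i j hij
    have h := congrFun (congrFun (hcomm _ (hEmem so hP (Matrix.single i i 1)))
      (Sum.inl i)) (Sum.inl j)
    rw [EmStd_mul_inl, mul_EmStd_inl] at h
    simpa [hij] using h
  have hoffLR : ∀ i j : Fin r, i ≠ j → (z : M2 r) (Sum.inl i) (Sum.inr j) = 0 := by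
    intro i j hij
    have h := congrFun (congrFun (hcomm _ (hEmem so hP (Matrix.single i i 1)))
      (Sum.inl i)) (Sum.inr j)
    rw [EmStd_mul_inl, mul_EmStd_inr] at h
    simpa [hij] using h
  have hoffRL : ∀ i j : Fin r, i ≠ j → (z : M2 r) (Sum.inr i) (Sum.inl j) = 0 := by
    intro i j hij
    have h := congrFun (congrFun (hcomm _ (hEmem so hP (Matrix.single i i 1)))
      (Sum.inr i)) (Sum.inl j)
    rw [EmStd_mul_inr, mul_EmStd_inl] at h
    simpa [hij] using h
  ext p q
  cases p with
  | inl i => cases q with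
    | inl j =>
      rcases eq_or_ne i j with rfl | hij
      · rw [Matrix.smul_apply, Matrix.one_apply_eq, smul_eq_mul, mul_one]
        exact hdiag i 0
      · rw [hoffLL i j hij, Matrix.smul_apply, Matrix.one_apply_ne (by simpa using hij)]
        simp
    | inr j =>
      rcases eq_or_ne i j with rfl | hij
      · rw [hPz.diagB i, Matrix.smul_apply, Matrix.one_apply_ne (by simp)]
        simp
      · rw [hoffLR i j hij, Matrix.smul_apply, Matrix.one_apply_ne (by simp)]
        simp
  | inr i => cases q with
    | inl j =>
      rcases eq_or_ne i j with rfl | hij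
      · rw [hPz.diagC i, Matrix.smul_apply, Matrix.one_apply_ne (by simp)]
        simp
      · rw [hoffRL i j hij, Matrix.smul_apply, Matrix.one_apply_ne (by simp)]
        simp
    | inr j =>
      rw [hPz.dblock i j]
      rcases eq_or_ne i j with rfl | hij
      · rw [Matrix.smul_apply, Matrix.one_apply_eq, smul_eq_mul, mul_one]
        exact hdiag i 0
      · rw [hoffLL j i (Ne.symm hij), Matrix.smul_apply,
          Matrix.one_apply_ne (by simpa using hij)]
        simp

end SO2r

/-- The Lie algebra `so_{4m+2}` over `F₂` (the Lie algebra of the Chevalley group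
`SO_{4m+2}`, type `D_{2m+1}`) decomposes as a direct sum of Lie ideals `F₂ ⊕ l`, where
`F₂` is the one-dimensional center and `l = [so_{4m+2}, so_{4m+2}]` is the derived
subalgebra; equivalently, the center of `so_{4m+2}` is not contained in the derived
subalgebra.  (In particular the decomposition is preserved by the adjoint
`SO_{4m+2}`-action.)

Here `so_{4m+2}` is any Lie subalgebra of matrices whose carrier is
`{A : (J·A)ᵀ = J·A and diag(J·A) = 0}` (i.e. `J·A` alternating), which is the correct
characteristic-2 description of the Lie algebra of `SO_{2r}` for the split form with
Gram matrix `J`. -/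
theorem stmt_15 (m : ℕ)
    (so : LieSubalgebra (ZMod 2)
        (Matrix (Fin (2 * m + 1) ⊕ Fin (2 * m + 1)) (Fin (2 * m + 1) ⊕ Fin (2 * m + 1))
          (ZMod 2)))
    (hso : ∀ A, A ∈ so ↔
        ((Jmat (2 * m + 1) * A)ᵀ = Jmat (2 * m + 1) * A ∧
         ∀ i, (Jmat (2 * m + 1) * A) i i = 0)) :
    IsCompl (LieAlgebra.center (ZMod 2) ↥so) (LieAlgebra.derivedSeries (ZMod 2) ↥so 1) ∧
    ¬ (LieAlgebra.center (ZMod 2) ↥so ≤ LieAlgebra.derivedSeries (ZMod 2) ↥so 1) := by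
  haveI : NeZero (2 * m + 1) := ⟨by omega⟩
  have hP : ∀ A, A ∈ so ↔ SO2r.P A := fun A => (hso A).trans (SO2r.P_iff A)
  have hDS : LieAlgebra.derivedSeries (ZMod 2) ↥so 1 =
      ⁅(⊤ : LieIdeal (ZMod 2) ↥so), (⊤ : LieIdeal (ZMod 2) ↥so)⁆ := by
    rw [LieAlgebra.derivedSeries_def, LieAlgebra.derivedSeriesOfIdeal_succ,
      LieAlgebra.derivedSeriesOfIdeal_zero]
  set I : ↥so := ⟨(1 : SO2r.M2 (2 * m + 1)), SO2r.one_mem_so so hP⟩ with hI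
  have hIcentral : I ∈ LieAlgebra.center (ZMod 2) ↥so := by
    rw [LieAlgebra.center, LieModule.mem_maxTrivSubmodule]
    intro x
    apply Subtype.ext
    show (x : SO2r.M2 (2 * m + 1)) * 1 - 1 * (x : SO2r.M2 (2 * m + 1)) = 0
    simp
  have hcast : ((2 * m + 1 : ℕ) : ZMod 2) = 1 := by
    push_cast
    have h2 : (2 : ZMod 2) = 0 := by decide
    rw [h2]; ring
  have htrlI : SO2r.trl ((I : SO2r.M2 (2 * m + 1))) = 1 := by
    rw [hI]
    show SO2r.trl (1 : SO2r.M2 (2 * m + 1)) = 1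
    rw [SO2r.trl_one, hcast]
  have hker : ∀ x : ↥so, x ∈ LieAlgebra.derivedSeries (ZMod 2) ↥so 1 →
      SO2r.trl (x : SO2r.M2 (2 * m + 1)) = 0 := fun x hx =>
    SO2r.D_le_ker so hP x (hDS ▸ hx)
  refine ⟨⟨?_, ?_⟩, ?_⟩
  · -- disjoint
    rw [disjoint_iff, eq_bot_iff]
    intro z hz
    rw [LieSubmodule.mem_inf] at hz
    obtain ⟨hz1, hz2⟩ := hz
    rw [LieAlgebra.center, LieModule.mem_maxTrivSubmodule] at hz1
    have hzc := SO2r.central_is_scalar so hP z hz1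
    have htr0 := hker z hz2
    rw [hzc, SO2r.trl_smul, SO2r.trl_one, hcast, mul_one] at htr0
    rw [LieSubmodule.mem_bot]
    apply Subtype.ext
    rw [hzc, htr0, zero_smul]
    rfl
  · -- codisjoint
    rw [codisjoint_iff, eq_top_iff]
    intro x _
    rw [LieSubmodule.mem_sup]
    refine ⟨SO2r.trl (x : SO2r.M2 (2 * m + 1)) • I,
      SMulMemClass.smul_mem _ hIcentral,
      x + SO2r.trl (x : SO2r.M2 (2 * m + 1)) • I, ?_, ?_⟩
    · rw [hDS]
      apply SO2r.ker_le_D so hP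
      have hcoe : ((x + SO2r.trl (x : SO2r.M2 (2 * m + 1)) • I : ↥so) : SO2r.M2 (2 * m + 1)) =
          (x : SO2r.M2 (2 * m + 1)) +
            SO2r.trl (x : SO2r.M2 (2 * m + 1)) • (1 : SO2r.M2 (2 * m + 1)) := rfl
      rw [hcoe, SO2r.trl_add, SO2r.trl_smul, SO2r.trl_one, hcast, mul_one]
      exact CharTwo.add_self_eq_zero _
    · have : SO2r.trl (x : SO2r.M2 (2 * m + 1)) • I +
          (x + SO2r.trl (x : SO2r.M2 (2 * m + 1)) • I) =
          x + (SO2r.trl (x : SO2r.M2 (2 * m + 1)) • I +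
            SO2r.trl (x : SO2r.M2 (2 * m + 1)) • I) := by abel
      rw [this, ← add_smul, CharTwo.add_self_eq_zero, zero_smul, add_zero]
  · -- not ≤
    intro hle
    have h0 := hker I (hle hIcentral)
    rw [htrlI] at h0
    exact one_ne_zero h0
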